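/- Let G be a finite group. Then the clique cover number of the intersection graph of subgroups I(G) — that is, the minimum number of cliques of I(G) needed to cover all vertices of I(G), which equals the chromatic number of the complement graph of I(G) — is equal to the number of proper subgroups of G of prime order. -/

import Mathlib

open SimpleGraph

/-- The intersection graph of subgroups of a group `G`: vertices are the
nontrivial proper subgroups of `G`, and two distinct vertices are adjacent
iff the corresponding subgroups have nontrivial intersection. -/
def interGraph (G : Type*) [Group G] :
    SimpleGraph {H : Subgroup G // H ≠ ⊥ ∧ H ≠ ⊤} where
  Adj H K := H ≠ K ∧ H.1 ⊓ K.1 ≠ ⊥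
  symm := by
    constructor
    rintro H K ⟨hne, hint⟩
    exact ⟨hne.symm, by rwa [inf_comm] at hint⟩
  loopless := by
    constructor
    rintro H ⟨hne, _⟩
    exact hne rfl

/-- Every nontrivial subgroup of a finite group contains a subgroup of prime order. -/
lemma exists_prime_order_le {G : Type*} [Group G] [Finite G] {H : Subgroup G} (hH : H ≠ ⊥) :
    ∃ P : Subgroup G, P ≤ H ∧ ∃ p : ℕ, p.Prime ∧ Nat.card P = p := by
  have hcard : Nat.card H ≠ 1 := fun h => hH (Subgroup.card_eq_one.mp h)
  obtain ⟨p, hp, hdvd⟩ := Nat.exists_prime_and_dvd hcard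
  haveI : Fact p.Prime := ⟨hp⟩
  obtain ⟨x, hx⟩ := exists_prime_orderOf_dvd_card' (G := H) p hdvd
  refine ⟨Subgroup.zpowers (x : G), Subgroup.zpowers_le.mpr x.2, p, hp, ?_⟩
  rw [Nat.card_zpowers, Subgroup.orderOf_coe, hx]

/-- A nontrivial subgroup of a prime-order subgroup equals it. -/
lemma eq_of_le_prime {G : Type*} [Group G] [Finite G] {P K : Subgroup G} {p : ℕ}
    (hp : p.Prime) (hP : Nat.card P = p) (hle : K ≤ P) (hK : K ≠ ⊥) : K = P := by
  have hdvd : Nat.card K ∣ Nat.card P := Subgroup.card_dvd_of_le hle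
  rw [hP] at hdvd
  rcases (Nat.Prime.eq_one_or_self_of_dvd hp _ hdvd) with h1 | h1
  · exact absurd (Subgroup.card_eq_one.mp h1) hK
  · exact Subgroup.eq_of_le_of_card_ge hle (by rw [h1, hP])

/-- Distinct prime-order subgroups intersect trivially. -/
lemma prime_order_inf_eq_bot {G : Type*} [Group G] [Finite G] {P Q : Subgroup G} {p q : ℕ}
    (hp : p.Prime) (hP : Nat.card P = p) (hq : q.Prime) (hQ : Nat.card Q = q)
    (hne : P ≠ Q) : P ⊓ Q = ⊥ := by
  by_contra h
  have h1 : P ⊓ Q = P := eq_of_le_prime hp hP inf_le_left h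
  have h2 : P ⊓ Q = Q := eq_of_le_prime hq hQ inf_le_right h
  exact hne (h1 ▸ h2)

theorem cliqueCoverNumber_intersectionGraph (G : Type*) [Group G] [Finite G] :
    (interGraph G)ᶜ.chromaticNumber =
      (Nat.card {H : Subgroup G // H ≠ ⊤ ∧ ∃ p : ℕ, p.Prime ∧ Nat.card H = p} : ℕ∞) := by
  classical
  set T := {H : Subgroup G // H ≠ ⊤ ∧ ∃ p : ℕ, p.Prime ∧ Nat.card H = p} with hT
  haveI : Finite (Subgroup G) := inferInstance
  haveI : Fintype T := Fintype.ofFinite T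
  haveI : Fintype {H : Subgroup G // H ≠ ⊥ ∧ H ≠ ⊤} := Fintype.ofFinite _
  -- a prime-order subgroup is nontrivial
  have hne_bot : ∀ P : T, P.1 ≠ ⊥ := by
    rintro ⟨P, hPtop, p, hp, hPcard⟩ hbot
    have hb : P = ⊥ := hbot
    rw [hb, Subgroup.card_bot] at hPcard
    exact hp.one_lt.ne' hPcard.symm
  apply le_antisymm
  · -- coloring of the complement with colors in T
    have hcol : ∀ v : {H : Subgroup G // H ≠ ⊥ ∧ H ≠ ⊤}, ∃ P : T, P.1 ≤ v.1 := by
      rintro ⟨H, hHbot, hHtop⟩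
      obtain ⟨P, hle, p, hp, hPcard⟩ := exists_prime_order_le hHbot
      have hPtop : P ≠ ⊤ := fun h => hHtop (top_le_iff.mp (h ▸ hle))
      exact ⟨⟨P, hPtop, p, hp, hPcard⟩, hle⟩
    choose f hf using hcol
    have C : (interGraph G)ᶜ.Coloring T := by
      refine Coloring.mk f ?_
      rintro v w ⟨hvw, hadj⟩ hfeq
      have hinf : (v.1 : Subgroup G) ⊓ (w.1 : Subgroup G) = ⊥ := by
        by_contra h
        exact hadj ⟨hvw, h⟩
      have h1 : (f v).1 ≤ (v.1 : Subgroup G) ⊓ (w.1 : Subgroup G) := le_inf (hf v) (hfeq ▸ hf w)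
      rw [hinf, le_bot_iff] at h1
      exact hne_bot (f v) h1
    have := C.colorable.chromaticNumber_le
    rwa [Nat.card_eq_fintype_card]
  · -- the prime-order subgroups form a clique in the complement
    have fV : ∀ P : T, (P.1 ≠ ⊥ ∧ P.1 ≠ ⊤) := fun P => ⟨hne_bot P, P.2.1⟩
    let g : T → {H : Subgroup G // H ≠ ⊥ ∧ H ≠ ⊤} := fun P => ⟨P.1, fV P⟩
    have hginj : Function.Injective g := by
      rintro ⟨P, hP⟩ ⟨Q, hQ⟩ h
      exact Subtype.ext (by simpa [g, Subtype.ext_iff] using h)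
    set s : Finset {H : Subgroup G // H ≠ ⊥ ∧ H ≠ ⊤} := Finset.univ.image g with hs
    have hclique : (interGraph G)ᶜ.IsClique s := by
      rintro a ha b hb hab
      simp only [hs, Finset.coe_image, Finset.coe_univ, Set.image_univ] at ha hb
      obtain ⟨P, rfl⟩ := ha
      obtain ⟨Q, rfl⟩ := hb
      have hPQ : P.1 ≠ Q.1 := fun h => hab (congrArg g (Subtype.ext h))
      obtain ⟨p, hp, hPcard⟩ := P.2.2
      obtain ⟨q, hq, hQcard⟩ := Q.2.2
      refine ⟨hab, ?_⟩
      rintro ⟨-, hbad⟩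
      exact hbad (prime_order_inf_eq_bot hp hPcard hq hQcard hPQ)
    have := hclique.card_le_chromaticNumber
    have hcard : s.card = Fintype.card T := by
      rw [hs, Finset.card_image_of_injective _ hginj, Finset.card_univ]
    rw [hcard] at this
    rwa [Nat.card_eq_fintype_card]
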